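/- Let a ≠ 0, 0 < s ≤ 1, α² + a² = s², |β| ≤ 1, |γ| ≤ s/20, and let D be the closed unit disc in ℝ². Define g(x,y) = αx + βxy + γ(x²/2 + G(y)) where G(y) = ∫₀^y F(w) dw and F(y) = −(1/2)∫₀^y ((α+βw)² + w² + a²)^{−1/2} dw. Define f_± = g ± 8 s^{−1} γ² (1 − x² − y²) on D. Then P(f₊) ≤ 0 and P(f₋) ≥ 0 on D, where P(f) = ((∂f/∂x)² + y² + a²)^{−1/2} ∂²f/∂x² + 2 ∂²f/∂y². -/

import Mathlib

open MeasureTheory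

/-- The quasilinear operator `P(f) = ((∂f/∂x)² + y² + a²)^{-1/2} ∂²f/∂x² + 2 ∂²f/∂y²`. -/
noncomputable def Pop (a : ℝ) (f : ℝ × ℝ → ℝ) (p : ℝ × ℝ) : ℝ :=
  ((fderiv ℝ f p ((1 : ℝ), (0 : ℝ))) ^ 2 + p.2 ^ 2 + a ^ 2) ^ (-(1 : ℝ) / 2)
    * fderiv ℝ (fun q => fderiv ℝ f q ((1 : ℝ), (0 : ℝ))) p ((1 : ℝ), (0 : ℝ))
  + 2 * fderiv ℝ (fun q => fderiv ℝ f q ((0 : ℝ), (1 : ℝ))) p ((0 : ℝ), (1 : ℝ))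

/-- The inner primitive `F(t) = -(1/2) ∫₀ᵗ ((α+βw)² + w² + a²)^{-1/2} dw`. -/
noncomputable def Ffn (a α β : ℝ) (t : ℝ) : ℝ :=
  -(1 / 2) * ∫ w in (0:ℝ)..t, ((α + β * w) ^ 2 + w ^ 2 + a ^ 2) ^ (-(1 : ℝ) / 2)

/-- The outer primitive `H(y) = ∫₀ʸ F(t) dt`. -/
noncomputable def Hfn (a α β : ℝ) (y : ℝ) : ℝ := ∫ t in (0:ℝ)..y, Ffn a α β t

lemma cont_phi {a α β : ℝ} (ha : a ≠ 0) :
    Continuous (fun w : ℝ => ((α + β * w) ^ 2 + w ^ 2 + a ^ 2) ^ (-(1 : ℝ) / 2)) := by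
  apply Continuous.rpow_const (by fun_prop)
  intro w
  left
  positivity

lemma Ffn_hasDerivAt {a α β : ℝ} (ha : a ≠ 0) (t : ℝ) :
    HasDerivAt (Ffn a α β)
      (-(1 / 2) * ((α + β * t) ^ 2 + t ^ 2 + a ^ 2) ^ (-(1 : ℝ) / 2)) t := by
  have h := ((cont_phi (a := a) (α := α) (β := β) ha).integral_hasStrictDerivAt 0 t).hasDerivAt
  exact h.const_mul (-(1 / 2))

lemma Ffn_cont {a α β : ℝ} (ha : a ≠ 0) : Continuous (Ffn a α β) := by
  have : Differentiable ℝ (Ffn a α β) := fun t => (Ffn_hasDerivAt ha t).differentiableAt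
  exact this.continuous

lemma Hfn_hasDerivAt {a α β : ℝ} (ha : a ≠ 0) (y : ℝ) :
    HasDerivAt (Hfn a α β) (Ffn a α β y) y :=
  ((Ffn_cont ha).integral_hasStrictDerivAt 0 y).hasDerivAt

lemma pop_formula (a α β γ c : ℝ) (ha : a ≠ 0) (f : ℝ × ℝ → ℝ)
    (hf : ∀ q : ℝ × ℝ, f q =
      α * q.1 + β * q.1 * q.2 + γ * (q.1 ^ 2 / 2 + Hfn a α β q.2)
        + c * (1 - q.1 ^ 2 - q.2 ^ 2)) (p : ℝ × ℝ) :
    Pop a f p =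
      ((α + β * p.2 + (γ - 2 * c) * p.1) ^ 2 + p.2 ^ 2 + a ^ 2) ^ (-(1 : ℝ) / 2) * (γ - 2 * c)
        - γ * ((α + β * p.2) ^ 2 + p.2 ^ 2 + a ^ 2) ^ (-(1 : ℝ) / 2) - 4 * c := by
  have hfe : f = fun q : ℝ × ℝ =>
      α * q.1 + β * q.1 * q.2 + γ * (q.1 ^ 2 / 2 + Hfn a α β q.2)
        + c * (1 - q.1 ^ 2 - q.2 ^ 2) := funext hf
  subst hfe
  have hD : ∀ q : ℝ × ℝ, HasFDerivAt
      (fun q : ℝ × ℝ =>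
        α * q.1 + β * q.1 * q.2 + γ * (q.1 ^ 2 / 2 + Hfn a α β q.2)
          + c * (1 - q.1 ^ 2 - q.2 ^ 2))
      ((α + β * q.2 + (γ - 2 * c) * q.1) • ContinuousLinearMap.fst ℝ ℝ ℝ
        + (β * q.1 + γ * Ffn a α β q.2 - 2 * c * q.2) • ContinuousLinearMap.snd ℝ ℝ ℝ) q := by
    intro q
    have hx : HasFDerivAt (fun q : ℝ × ℝ => q.1) (ContinuousLinearMap.fst ℝ ℝ ℝ) q :=
      hasFDerivAt_fst
    have hy : HasFDerivAt (fun q : ℝ × ℝ => q.2) (ContinuousLinearMap.snd ℝ ℝ ℝ) q :=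
      hasFDerivAt_snd
    have hH : HasFDerivAt (fun q : ℝ × ℝ => Hfn a α β q.2)
        (Ffn a α β q.2 • ContinuousLinearMap.snd ℝ ℝ ℝ) q :=
      (Hfn_hasDerivAt ha q.2).comp_hasFDerivAt q hy
    have h := (((hx.const_mul α).add (((hx.mul hy)).const_mul β)).add
        ((((hx.mul hx).const_mul ((1:ℝ)/2)).add hH).const_mul γ)).add
      ((((hasFDerivAt_const (1:ℝ) q).sub ((hx.mul hx))).sub (hy.mul hy)).const_mul c)
    refine (h.congr_fderiv ?_).congr_of_eventuallyEq (Filter.Eventually.of_forall fun r => ?_)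
    · apply ContinuousLinearMap.ext
      rintro ⟨u, v⟩
      simp [ContinuousLinearMap.smul_apply, smul_eq_mul]
      ring
    · simp only [Pi.add_apply, Pi.sub_apply, Pi.mul_apply]; ring
  have e1 : ∀ q : ℝ × ℝ, fderiv ℝ
      (fun q : ℝ × ℝ =>
        α * q.1 + β * q.1 * q.2 + γ * (q.1 ^ 2 / 2 + Hfn a α β q.2)
          + c * (1 - q.1 ^ 2 - q.2 ^ 2)) q ((1 : ℝ), (0 : ℝ))
      = α + β * q.2 + (γ - 2 * c) * q.1 := by
    intro q
    rw [(hD q).fderiv]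
    simp
  have e2 : ∀ q : ℝ × ℝ, fderiv ℝ
      (fun q : ℝ × ℝ =>
        α * q.1 + β * q.1 * q.2 + γ * (q.1 ^ 2 / 2 + Hfn a α β q.2)
          + c * (1 - q.1 ^ 2 - q.2 ^ 2)) q ((0 : ℝ), (1 : ℝ))
      = β * q.1 + γ * Ffn a α β q.2 - 2 * c * q.2 := by
    intro q
    rw [(hD q).fderiv]
    simp
  have h2x : fderiv ℝ (fun q : ℝ × ℝ => fderiv ℝ
      (fun q : ℝ × ℝ =>
        α * q.1 + β * q.1 * q.2 + γ * (q.1 ^ 2 / 2 + Hfn a α β q.2)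
          + c * (1 - q.1 ^ 2 - q.2 ^ 2)) q ((1 : ℝ), (0 : ℝ))) p ((1 : ℝ), (0 : ℝ))
      = γ - 2 * c := by
    have hre : (fun q : ℝ × ℝ => fderiv ℝ
        (fun q : ℝ × ℝ =>
          α * q.1 + β * q.1 * q.2 + γ * (q.1 ^ 2 / 2 + Hfn a α β q.2)
            + c * (1 - q.1 ^ 2 - q.2 ^ 2)) q ((1 : ℝ), (0 : ℝ)))
        = fun q : ℝ × ℝ => α + β * q.2 + (γ - 2 * c) * q.1 := funext e1
    rw [hre]
    have hx : HasFDerivAt (fun q : ℝ × ℝ => q.1) (ContinuousLinearMap.fst ℝ ℝ ℝ) p :=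
      hasFDerivAt_fst
    have hy : HasFDerivAt (fun q : ℝ × ℝ => q.2) (ContinuousLinearMap.snd ℝ ℝ ℝ) p :=
      hasFDerivAt_snd
    have h := ((hasFDerivAt_const α p).add (hy.const_mul β)).add (hx.const_mul (γ - 2 * c))
    rw [(show HasFDerivAt (fun q : ℝ × ℝ => α + β * q.2 + (γ - 2 * c) * q.1) _ p from h).fderiv]
    simp
  have h2y : fderiv ℝ (fun q : ℝ × ℝ => fderiv ℝ
      (fun q : ℝ × ℝ =>
        α * q.1 + β * q.1 * q.2 + γ * (q.1 ^ 2 / 2 + Hfn a α β q.2)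
          + c * (1 - q.1 ^ 2 - q.2 ^ 2)) q ((0 : ℝ), (1 : ℝ))) p ((0 : ℝ), (1 : ℝ))
      = γ * (-(1 / 2) * ((α + β * p.2) ^ 2 + p.2 ^ 2 + a ^ 2) ^ (-(1 : ℝ) / 2)) - 2 * c := by
    have hre : (fun q : ℝ × ℝ => fderiv ℝ
        (fun q : ℝ × ℝ =>
          α * q.1 + β * q.1 * q.2 + γ * (q.1 ^ 2 / 2 + Hfn a α β q.2)
            + c * (1 - q.1 ^ 2 - q.2 ^ 2)) q ((0 : ℝ), (1 : ℝ)))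
        = fun q : ℝ × ℝ => β * q.1 + γ * Ffn a α β q.2 - 2 * c * q.2 := funext e2
    rw [hre]
    have hx : HasFDerivAt (fun q : ℝ × ℝ => q.1) (ContinuousLinearMap.fst ℝ ℝ ℝ) p :=
      hasFDerivAt_fst
    have hy : HasFDerivAt (fun q : ℝ × ℝ => q.2) (ContinuousLinearMap.snd ℝ ℝ ℝ) p :=
      hasFDerivAt_snd
    have hF : HasFDerivAt (fun q : ℝ × ℝ => Ffn a α β q.2)
        ((-(1 / 2) * ((α + β * p.2) ^ 2 + p.2 ^ 2 + a ^ 2) ^ (-(1 : ℝ) / 2)) •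
          ContinuousLinearMap.snd ℝ ℝ ℝ) p :=
      (Ffn_hasDerivAt ha p.2).comp_hasFDerivAt p hy
    have h := ((hx.const_mul β).add (hF.const_mul γ)).sub (hy.const_mul (2 * c))
    rw [(show HasFDerivAt (fun q : ℝ × ℝ => β * q.1 + γ * Ffn a α β q.2 - 2 * c * q.2) _ p from h).fderiv]
    simp
  rw [Pop, e1 p, h2x, h2y]
  ring

lemma key_core (s γ c₀ δ r A B P Q : ℝ) (hs : 0 < s) (hγ : 20 * |γ| ≤ s)
    (hδ : |δ| ≤ 9 / 5 * |γ|)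
    (hA : A = (c₀ + δ) ^ 2 + r) (hB : B = c₀ ^ 2 + r) (hBs : s ^ 2 ≤ 2 * B)
    (hP : 0 < P) (hQ : 0 < Q) (hP2 : P ^ 2 = A) (hQ2 : Q ^ 2 = B) (hc0 : |c₀| ≤ Q) :
    |γ| * |P⁻¹ - Q⁻¹| ≤ 16 * s⁻¹ * γ ^ 2 * P⁻¹ := by
  have hmain : s * |γ| * |Q - P| ≤ 16 * γ ^ 2 * Q := by
    have h2 : |Q - P| * (Q + P) = |B - A| := by
      rw [← abs_of_pos (show (0:ℝ) < Q + P by linarith), ← abs_mul]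
      congr 1
      linear_combination hQ2 - hP2
    have h3 : |B - A| ≤ |δ| * (2 * Q + |δ|) := by
      have hd : B - A = -(2 * c₀ * δ + δ ^ 2) := by rw [hA, hB]; ring
      rw [hd, abs_neg]
      calc |2 * c₀ * δ + δ ^ 2| ≤ |2 * c₀ * δ| + |δ ^ 2| := abs_add_le _ _
        _ = 2 * |c₀| * |δ| + |δ| * |δ| := by
            rw [abs_mul, abs_mul, abs_two, abs_pow]; ring
        _ ≤ |δ| * (2 * Q + |δ|) := by
            linarith [mul_nonneg (sub_nonneg.2 hc0) (abs_nonneg δ)]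
    have hQP : |Q - P| * Q ≤ |B - A| := by
      calc |Q - P| * Q ≤ |Q - P| * (Q + P) := by
            linarith [mul_nonneg (abs_nonneg (Q - P)) hP.le]
        _ = |B - A| := h2
    have hfin : s * |γ| * (|δ| * (2 * Q + |δ|)) ≤ 16 * γ ^ 2 * Q ^ 2 := by
      have hsq : s ^ 2 ≤ 2 * Q ^ 2 := by rw [hQ2]; exact hBs
      have hsQ : s * Q ≤ 3 / 2 * Q ^ 2 := by linarith [sq_nonneg (s - Q)]
      have hsG : s * |γ| ≤ Q ^ 2 / 10 := by
        linarith [mul_nonneg hs.le (sub_nonneg.2 hγ)]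
      have hD2 : |δ| ^ 2 ≤ 81 / 25 * |γ| ^ 2 := by
        have := mul_self_le_mul_self (abs_nonneg δ) hδ
        nlinarith [this]
      have k1 : 0 ≤ (9 / 5 * |γ| - |δ|) * (s * |γ| * Q) :=
        mul_nonneg (sub_nonneg.2 hδ) (mul_nonneg (mul_nonneg hs.le (abs_nonneg γ)) hQ.le)
      have k2 : 0 ≤ (3 / 2 * Q ^ 2 - s * Q) * (|γ| * |γ|) :=
        mul_nonneg (sub_nonneg.2 hsQ) (mul_nonneg (abs_nonneg γ) (abs_nonneg γ))
      have k3 : 0 ≤ (81 / 25 * |γ| ^ 2 - |δ| ^ 2) * (s * |γ|) :=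
        mul_nonneg (sub_nonneg.2 hD2) (mul_nonneg hs.le (abs_nonneg γ))
      have k4 : 0 ≤ (Q ^ 2 / 10 - s * |γ|) * (|γ| * |γ|) :=
        mul_nonneg (sub_nonneg.2 hsG) (mul_nonneg (abs_nonneg γ) (abs_nonneg γ))
      rw [show (16 : ℝ) * γ ^ 2 * Q ^ 2 = 16 * |γ| ^ 2 * Q ^ 2 by rw [sq_abs]]
      linarith [k1, k2, k3, k4,
        mul_nonneg (mul_nonneg (abs_nonneg γ) (abs_nonneg γ)) (mul_nonneg hQ.le hQ.le)]
    have hch : s * |γ| * |Q - P| * Q ≤ 16 * γ ^ 2 * Q * Q := by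
      calc s * |γ| * |Q - P| * Q = s * |γ| * (|Q - P| * Q) := by ring
        _ ≤ s * |γ| * |B - A| := by
            apply mul_le_mul_of_nonneg_left hQP (by positivity)
        _ ≤ s * |γ| * (|δ| * (2 * Q + |δ|)) := by
            apply mul_le_mul_of_nonneg_left h3 (by positivity)
        _ ≤ 16 * γ ^ 2 * Q ^ 2 := hfin
        _ = 16 * γ ^ 2 * Q * Q := by ring
    exact le_of_mul_le_mul_right hch hQ
  have h1 : P⁻¹ - Q⁻¹ = (Q - P) / (P * Q) := by field_simp
  rw [h1, abs_div, abs_of_pos (by positivity : (0:ℝ) < P * Q), mul_div_assoc',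
    div_le_iff₀ (by positivity : (0:ℝ) < P * Q)]
  have hrhs : 16 * s⁻¹ * γ ^ 2 * P⁻¹ * (P * Q) = 16 * γ ^ 2 * Q / s := by
    field_simp
  rw [hrhs, le_div_iff₀ hs]
  linarith [hmain]

lemma key_ineq (s γ c₀ δ r A B : ℝ) (hs : 0 < s) (hγ : 20 * |γ| ≤ s)
    (hδ : |δ| ≤ 9 / 5 * |γ|) (hr : 0 < r)
    (hA : A = (c₀ + δ) ^ 2 + r) (hB : B = c₀ ^ 2 + r) (hBs : s ^ 2 ≤ 2 * B) :
    |γ| * |A ^ (-(1 : ℝ) / 2) - B ^ (-(1 : ℝ) / 2)| ≤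
      16 * s⁻¹ * γ ^ 2 * A ^ (-(1 : ℝ) / 2) := by
  have hA0 : 0 < A := by rw [hA]; positivity
  have hB0 : 0 < B := by rw [hB]; positivity
  have hrA : A ^ (-(1 : ℝ) / 2) = (Real.sqrt A)⁻¹ := by
    rw [neg_div, Real.rpow_neg hA0.le, ← Real.sqrt_eq_rpow]
  have hrB : B ^ (-(1 : ℝ) / 2) = (Real.sqrt B)⁻¹ := by
    rw [neg_div, Real.rpow_neg hB0.le, ← Real.sqrt_eq_rpow]
  rw [hrA, hrB]
  have hc0 : |c₀| ≤ Real.sqrt B := by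
    rw [← Real.sqrt_sq_eq_abs]
    apply Real.sqrt_le_sqrt
    rw [hB]; nlinarith [hr.le]
  exact key_core s γ c₀ δ r A B (Real.sqrt A) (Real.sqrt B) hs hγ hδ hA hB hBs
    (Real.sqrt_pos.2 hA0) (Real.sqrt_pos.2 hB0) (Real.sq_sqrt hA0.le) (Real.sq_sqrt hB0.le) hc0

set_option maxHeartbeats 2000000 in
/-- Proposition 4.4: `f₊ = g + 8 s⁻¹ γ² (1 - x² - y²)` is a supersolution and
`f₋ = g - 8 s⁻¹ γ² (1 - x² - y²)` a subsolution of `P(f) = 0` on the closed unit disc. -/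
theorem stmt_5 (a s α β γ : ℝ) (ha : a ≠ 0) (hs0 : 0 < s) (hs1 : s ≤ 1)
    (hα : α ^ 2 + a ^ 2 = s ^ 2) (hβ : |β| ≤ 1) (hγ : |γ| ≤ s / 20)
    (g fplus fminus : ℝ × ℝ → ℝ)
    (hg : ∀ x y : ℝ, g (x, y) =
      α * x + β * x * y + γ * (x ^ 2 / 2 +
        ∫ t in (0:ℝ)..y, (-(1 / 2) *
          ∫ w in (0:ℝ)..t, ((α + β * w) ^ 2 + w ^ 2 + a ^ 2) ^ (-(1 : ℝ) / 2))))
    (hfp : ∀ p : ℝ × ℝ, fplus p = g p + 8 * s⁻¹ * γ ^ 2 * (1 - p.1 ^ 2 - p.2 ^ 2))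
    (hfm : ∀ p : ℝ × ℝ, fminus p = g p - 8 * s⁻¹ * γ ^ 2 * (1 - p.1 ^ 2 - p.2 ^ 2)) :
    ∀ p : ℝ × ℝ, p.1 ^ 2 + p.2 ^ 2 ≤ 1 →
      Pop a fplus p ≤ 0 ∧ 0 ≤ Pop a fminus p := by
  rintro ⟨x, y⟩ hp
  simp only at hp
  have hfp' : ∀ q : ℝ × ℝ, fplus q =
      α * q.1 + β * q.1 * q.2 + γ * (q.1 ^ 2 / 2 + Hfn a α β q.2)
        + (8 * s⁻¹ * γ ^ 2) * (1 - q.1 ^ 2 - q.2 ^ 2) := by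
    rintro ⟨u, v⟩
    rw [hfp (u, v), hg u v]
    simp only [Hfn, Ffn]
    try ring
  have hfm' : ∀ q : ℝ × ℝ, fminus q =
      α * q.1 + β * q.1 * q.2 + γ * (q.1 ^ 2 / 2 + Hfn a α β q.2)
        + (-(8 * s⁻¹ * γ ^ 2)) * (1 - q.1 ^ 2 - q.2 ^ 2) := by
    rintro ⟨u, v⟩
    rw [hfm (u, v), hg u v]
    simp only [Hfn, Ffn]
    try ring
  have hPp := pop_formula a α β γ (8 * s⁻¹ * γ ^ 2) ha fplus hfp' (x, y)
  have hPm := pop_formula a α β γ (-(8 * s⁻¹ * γ ^ 2)) ha fminus hfm' (x, y)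
  simp only at hPp hPm
  -- abbreviations
  have hx1 : |x| ≤ 1 := by
    rw [abs_le]; constructor <;> nlinarith [sq_nonneg y, sq_nonneg x]
  have hγs : 20 * |γ| ≤ s := by linarith
  have h16 : 16 * s⁻¹ * γ ^ 2 ≤ 4 / 5 * |γ| := by
    have : 16 * s⁻¹ * γ ^ 2 = 16 * s⁻¹ * |γ| * |γ| := by rw [← sq_abs]; ring
    rw [this]
    have h1 : 16 * s⁻¹ * |γ| * |γ| ≤ 16 * s⁻¹ * |γ| * (s / 20) := by
      apply mul_le_mul_of_nonneg_left hγ (by positivity)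
    have h2 : 16 * s⁻¹ * |γ| * (s / 20) = 4 / 5 * |γ| * (s⁻¹ * s) := by ring
    rw [h2, inv_mul_cancel₀ hs0.ne'] at h1
    linarith [h1]
  have hc16 : 0 ≤ 16 * s⁻¹ * γ ^ 2 := by positivity
  have hBs : s ^ 2 ≤ 2 * ((α + β * y) ^ 2 + (y ^ 2 + a ^ 2)) := by
    have hβ2 : β ^ 2 ≤ 1 := by nlinarith [sq_abs β, abs_nonneg β]
    nlinarith [sq_nonneg (α + 2 * β * y), sq_nonneg y,
      mul_le_mul_of_nonneg_right hβ2 (sq_nonneg y)]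
  have hr : (0:ℝ) < y ^ 2 + a ^ 2 := by positivity
  constructor
  · -- plus case
    have hδ : |(γ - 2 * (8 * s⁻¹ * γ ^ 2)) * x| ≤ 9 / 5 * |γ| := by
      rw [abs_mul]
      have h1 : |γ - 2 * (8 * s⁻¹ * γ ^ 2)| ≤ 9 / 5 * |γ| := by
        calc |γ - 2 * (8 * s⁻¹ * γ ^ 2)| ≤ |γ| + |2 * (8 * s⁻¹ * γ ^ 2)| := abs_sub _ _
          _ = |γ| + 2 * (8 * s⁻¹ * γ ^ 2) := by
              rw [abs_of_nonneg (by positivity : (0:ℝ) ≤ 2 * (8 * s⁻¹ * γ ^ 2))]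
          _ ≤ 9 / 5 * |γ| := by linarith [h16]
      calc |γ - 2 * (8 * s⁻¹ * γ ^ 2)| * |x| ≤ |γ - 2 * (8 * s⁻¹ * γ ^ 2)| * 1 := by
            apply mul_le_mul_of_nonneg_left hx1 (abs_nonneg _)
        _ ≤ 9 / 5 * |γ| := by rw [mul_one]; exact h1
    have hkey := key_ineq s γ (α + β * y) ((γ - 2 * (8 * s⁻¹ * γ ^ 2)) * x) (y ^ 2 + a ^ 2)
      ((α + β * y + (γ - 2 * (8 * s⁻¹ * γ ^ 2)) * x) ^ 2 + y ^ 2 + a ^ 2)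
      ((α + β * y) ^ 2 + y ^ 2 + a ^ 2) hs0 hγs hδ hr (by ring) (by ring) (by linarith)
    rw [hPp]
    set vA := ((α + β * y + (γ - 2 * (8 * s⁻¹ * γ ^ 2)) * x) ^ 2 + y ^ 2 + a ^ 2) ^ (-(1 : ℝ) / 2) with hvA
    set vB := ((α + β * y) ^ 2 + y ^ 2 + a ^ 2) ^ (-(1 : ℝ) / 2) with hvB
    clear_value vA vB
    have habs : γ * (vA - vB) ≤ |γ| * |vA - vB| := by
      calc γ * (vA - vB) ≤ |γ * (vA - vB)| := le_abs_self _
        _ = |γ| * |vA - vB| := abs_mul _ _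
    linarith [hkey, habs, hc16]
  · -- minus case
    have hδ : |(γ - 2 * -(8 * s⁻¹ * γ ^ 2)) * x| ≤ 9 / 5 * |γ| := by
      rw [abs_mul]
      have h1 : |γ - 2 * -(8 * s⁻¹ * γ ^ 2)| ≤ 9 / 5 * |γ| := by
        have hre : γ - 2 * -(8 * s⁻¹ * γ ^ 2) = γ + 2 * (8 * s⁻¹ * γ ^ 2) := by ring
        rw [hre]
        calc |γ + 2 * (8 * s⁻¹ * γ ^ 2)| ≤ |γ| + |2 * (8 * s⁻¹ * γ ^ 2)| := abs_add_le _ _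
          _ = |γ| + 2 * (8 * s⁻¹ * γ ^ 2) := by
              rw [abs_of_nonneg (by positivity : (0:ℝ) ≤ 2 * (8 * s⁻¹ * γ ^ 2))]
          _ ≤ 9 / 5 * |γ| := by linarith [h16]
      calc |γ - 2 * -(8 * s⁻¹ * γ ^ 2)| * |x| ≤ |γ - 2 * -(8 * s⁻¹ * γ ^ 2)| * 1 := by
            apply mul_le_mul_of_nonneg_left hx1 (abs_nonneg _)
        _ ≤ 9 / 5 * |γ| := by rw [mul_one]; exact h1
    have hkey := key_ineq s γ (α + β * y) ((γ - 2 * -(8 * s⁻¹ * γ ^ 2)) * x) (y ^ 2 + a ^ 2)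
      ((α + β * y + (γ - 2 * -(8 * s⁻¹ * γ ^ 2)) * x) ^ 2 + y ^ 2 + a ^ 2)
      ((α + β * y) ^ 2 + y ^ 2 + a ^ 2) hs0 hγs hδ hr (by ring) (by ring) (by linarith)
    rw [hPm]
    set vA := ((α + β * y + (γ - 2 * -(8 * s⁻¹ * γ ^ 2)) * x) ^ 2 + y ^ 2 + a ^ 2) ^ (-(1 : ℝ) / 2) with hvA
    set vB := ((α + β * y) ^ 2 + y ^ 2 + a ^ 2) ^ (-(1 : ℝ) / 2) with hvB
    clear_value vA vB
    have habs : -(|γ| * |vA - vB|) ≤ γ * (vA - vB) := by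
      have h := neg_abs_le (γ * (vA - vB))
      rw [abs_mul] at h
      linarith [h]
    linarith [hkey, habs, hc16]
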